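/- Let u be a K-linear endomorphism of E whose minimal polynomial is p^k with p ∈ K[X] monic irreducible, let 0 ≤ i ≤ k, let W = ker p(u)^i (a u-invariant subspace), and let ū be the endomorphism induced by u on the quotient E/W. Then for every K-linear automorphism w of E/W commuting with ū there exists a K-linear automorphism v of E commuting with u which induces w on E/W. -/

import Mathlib

open Polynomial

namespace Stmt3Aux

variable {K E : Type*} [Field K] [AddCommGroup E] [Module K E]

lemma pow_mem (u : Module.End K E) {N : Submodule K E} (hN : ∀ y ∈ N, u y ∈ N)
    (n : ℕ) : ∀ y ∈ N, (u ^ n) y ∈ N := by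
  induction n with
  | zero => intro y hy; simpa using hy
  | succ n ih =>
    intro y hy
    rw [pow_succ, Module.End.mul_apply]
    exact ih _ (hN y hy)

lemma aeval_mem (u : Module.End K E) {N : Submodule K E} (hN : ∀ y ∈ N, u y ∈ N)
    (r : K[X]) : ∀ y ∈ N, aeval u r y ∈ N := by
  induction r using Polynomial.induction_on' with
  | add f g hf hg =>
    intro y hy
    rw [map_add, LinearMap.add_apply]
    exact N.add_mem (hf y hy) (hg y hy)
  | monomial n a =>
    intro y hy
    rw [aeval_monomial, Module.End.mul_apply, Module.algebraMap_end_apply]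
    exact N.smul_mem _ (pow_mem u hN n y hy)

lemma comm_pow (u : Module.End K E) {N : Submodule K E} (hN : ∀ y ∈ N, u y ∈ N)
    (φ : E →ₗ[K] E) (hφ : ∀ y ∈ N, φ (u y) = u (φ y)) (n : ℕ) :
    ∀ y ∈ N, φ ((u ^ n) y) = (u ^ n) (φ y) := by
  induction n with
  | zero => intro y _; simp
  | succ n ih =>
    intro y hy
    rw [pow_succ', Module.End.mul_apply, Module.End.mul_apply,
      ← ih y hy, ← hφ _ (pow_mem u hN n y hy)]

lemma comm_aeval (u : Module.End K E) {N : Submodule K E} (hN : ∀ y ∈ N, u y ∈ N)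
    (φ : E →ₗ[K] E) (hφ : ∀ y ∈ N, φ (u y) = u (φ y)) (r : K[X]) :
    ∀ y ∈ N, φ (aeval u r y) = aeval u r (φ y) := by
  induction r using Polynomial.induction_on' with
  | add f g hf hg =>
    intro y hy
    rw [map_add, LinearMap.add_apply, LinearMap.add_apply, map_add,
      hf y hy, hg y hy]
  | monomial n a =>
    intro y hy
    rw [aeval_monomial, Module.End.mul_apply, Module.End.mul_apply,
      Module.algebraMap_end_apply, Module.algebraMap_end_apply, map_smul,
      comm_pow u hN φ hφ n y hy]

/-- `r ↦ (aeval u r) x` as a `K`-linear map. -/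
noncomputable def aevalAt (u : Module.End K E) (x : E) : K[X] →ₗ[K] E where
  toFun r := aeval u r x
  map_add' f g := by simp [map_add]
  map_smul' c f := by simp

@[simp] lemma aevalAt_apply (u : Module.End K E) (x : E) (r : K[X]) :
    aevalAt u x r = aeval u r x := rfl

/-- The `K[X]`-span of `x` (with `X` acting as `u`). -/
noncomputable def Rsp (u : Module.End K E) (x : E) : Submodule K E :=
  LinearMap.range (aevalAt u x)

lemma one_step (u : Module.End K E) {p : K[X]} (hirr : Irreducible p)
    {N : Submodule K E} (hNinv : ∀ y ∈ N, u y ∈ N)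
    (φ : E →ₗ[K] E) (hφeq : ∀ y ∈ N, φ (u y) = u (φ y))
    {x : E} (hx : x ∉ N) (hpx : aeval u p x ∈ N)
    {m : E} (hm : aeval u p m = φ (aeval u p x)) :
    ∃ φ' : E →ₗ[K] E,
      (∀ y ∈ N, φ' y = φ y) ∧
      (∀ y ∈ N ⊔ Rsp u x, ∃ n ∈ N, ∃ r : K[X],
        y = n + aeval u r x ∧ φ' y = φ n + aeval u r m) ∧
      (∀ y ∈ N ⊔ Rsp u x, φ' (u y) = u (φ' y)) ∧
      (∀ y ∈ N ⊔ Rsp u x, u y ∈ N ⊔ Rsp u x) ∧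
      x ∈ N ⊔ Rsp u x := by
  classical
  set ρ : (↥N × K[X]) →ₗ[K] E := LinearMap.coprod N.subtype (aevalAt u x) with hρ
  set ψ : (↥N × K[X]) →ₗ[K] E := LinearMap.coprod (φ.comp N.subtype) (aevalAt u m) with hψ
  have hρ_apply : ∀ (n : ↥N) (r : K[X]), ρ (n, r) = (n : E) + aeval u r x := by
    intro n r; simp [hρ]
  have hψ_apply : ∀ (n : ↥N) (r : K[X]), ψ (n, r) = φ (n : E) + aeval u r m := by
    intro n r; simp [hψ]
  have hker : LinearMap.ker ρ ≤ LinearMap.ker ψ := by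
    rintro ⟨n, r⟩ hz
    rw [LinearMap.mem_ker, hρ_apply] at hz
    rw [LinearMap.mem_ker, hψ_apply]
    have hnr : aeval u r x = -(n : E) := by linear_combination (norm := module) hz
    by_cases hdvd : p ∣ r
    · obtain ⟨s, rfl⟩ := hdvd
      have l1 : aeval u (p * s) m = aeval u s (aeval u p m) := by
        rw [mul_comm, map_mul, Module.End.mul_apply]
      have l2 : aeval u (p * s) x = aeval u s (aeval u p x) := by
        rw [mul_comm, map_mul, Module.End.mul_apply]
      have h1 : aeval u (p * s) m = φ (aeval u (p * s) x) := by
        rw [l1, l2, hm, comm_aeval u hNinv φ hφeq s _ hpx]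
      rw [h1, ← map_add, hz, map_zero]
    · exfalso
      obtain ⟨a, b, hab⟩ := (hirr.coprime_iff_not_dvd).mpr hdvd
      have hxrep : x = aeval u a (aeval u p x) + aeval u b (aeval u r x) := by
        have := congrArg (fun f => aeval u f x) hab
        simpa [map_mul, map_add, Module.End.mul_apply, LinearMap.add_apply] using this.symm
      have hxN : x ∈ N := by
        rw [hxrep]
        refine N.add_mem (aeval_mem u hNinv a _ hpx) (aeval_mem u hNinv b _ ?_)
        rw [hnr]; exact N.neg_mem n.2
      exact hx hxN
  have hrange : LinearMap.range ρ = N ⊔ Rsp u x := by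
    rw [hρ, LinearMap.range_coprod, Submodule.range_subtype]; rfl
  set φ'' : ↥(N ⊔ Rsp u x) →ₗ[K] E :=
    ((LinearMap.ker ρ).liftQ ψ hker).comp
      ((LinearMap.quotKerEquivRange ρ).symm.toLinearMap.comp
        (LinearEquiv.ofEq _ _ hrange.symm).toLinearMap) with hφ''
  have hφ''_key : ∀ (z : ↥N × K[X]) (hy : ρ z ∈ N ⊔ Rsp u x), φ'' ⟨ρ z, hy⟩ = ψ z := by
    intro z hy
    have h1 : (LinearEquiv.ofEq _ _ hrange.symm) (⟨ρ z, hy⟩ : ↥(N ⊔ Rsp u x))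
        = ⟨ρ z, LinearMap.mem_range_self ρ z⟩ := rfl
    have h2 : (LinearMap.quotKerEquivRange ρ).symm ⟨ρ z, LinearMap.mem_range_self ρ z⟩
        = Submodule.Quotient.mk z := by
      apply (LinearMap.quotKerEquivRange ρ).injective
      rw [LinearEquiv.apply_symm_apply]
      exact Subtype.ext (LinearMap.quotKerEquivRange_apply_mk ρ z).symm
    rw [hφ'', LinearMap.comp_apply, LinearMap.comp_apply]
    rw [LinearEquiv.coe_toLinearMap, LinearEquiv.coe_toLinearMap, h1, h2]
    exact Submodule.liftQ_apply _ ψ z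
  obtain ⟨φ', hφ'⟩ := LinearMap.exists_extend φ''
  have hφ'_key : ∀ (n : ↥N) (r : K[X]) (hy : (n : E) + aeval u r x ∈ N ⊔ Rsp u x),
      φ' ((n : E) + aeval u r x) = φ (n : E) + aeval u r m := by
    intro n r hy
    have : φ' ((n : E) + aeval u r x) = φ'' ⟨(n : E) + aeval u r x, hy⟩ := by
      have := congrArg (fun f => f (⟨(n : E) + aeval u r x, hy⟩ : ↥(N ⊔ Rsp u x))) hφ'
      simpa using this
    rw [this]
    have hz : ρ (n, r) = (n : E) + aeval u r x := hρ_apply n r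
    have := hφ''_key (n, r) (by rw [hz]; exact hy)
    rw [hψ_apply] at this
    convert this using 2
    exact Subtype.ext hz.symm
  have hmemN : ∀ y ∈ N, y ∈ N ⊔ Rsp u x := fun y hy => Submodule.mem_sup_left hy
  have hmemR : ∀ r : K[X], aeval u r x ∈ N ⊔ Rsp u x := fun r =>
    Submodule.mem_sup_right ⟨r, rfl⟩
  have hrep : ∀ y ∈ N ⊔ Rsp u x, ∃ n ∈ N, ∃ r : K[X], y = n + aeval u r x := by
    intro y hy
    rw [← hrange] at hy
    obtain ⟨⟨n, r⟩, rfl⟩ := hy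
    exact ⟨n, n.2, r, (hρ_apply n r)⟩
  refine ⟨φ', ?_, ?_, ?_, ?_, ?_⟩
  · intro y hy
    have h0 := hφ'_key ⟨y, hy⟩ 0 (by simpa using hmemN y hy)
    simpa using h0
  · intro y hy
    obtain ⟨n, hn, r, hyrep⟩ := hrep y hy
    refine ⟨n, hn, r, hyrep, ?_⟩
    rw [hyrep]
    exact hφ'_key ⟨n, hn⟩ r (hyrep ▸ hy)
  · intro y hy
    obtain ⟨n, hn, r, hyrep⟩ := hrep y hy
    have hux : u (aeval u r x) = aeval u (X * r) x := by
      rw [map_mul, Module.End.mul_apply, aeval_X]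
    have hum : u (aeval u r m) = aeval u (X * r) m := by
      rw [map_mul, Module.End.mul_apply, aeval_X]
    have huy : u y = (⟨u n, hNinv n hn⟩ : ↥N) + aeval u (X * r) x := by
      rw [hyrep, map_add, hux]
    have h1 : φ' (u y) = φ (u n) + aeval u (X * r) m := by
      rw [huy]
      exact hφ'_key ⟨u n, hNinv n hn⟩ (X * r)
        (Submodule.add_mem _ (hmemN _ (hNinv n hn)) (hmemR (X * r)))
    rw [h1, hφeq n hn, ← hum, hyrep]
    rw [hφ'_key ⟨n, hn⟩ r (hyrep ▸ hy), map_add]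
  · intro y hy
    obtain ⟨n, hn, r, hyrep⟩ := hrep y hy
    rw [hyrep, map_add]
    refine Submodule.add_mem _ (hmemN _ (hNinv n hn)) ?_
    have hux : u (aeval u r x) = aeval u (X * r) x := by
      rw [map_mul, Module.End.mul_apply, aeval_X]
    rw [hux]
    exact hmemR (X * r)
  · have h := hmemR 1
    simpa using h

lemma climb_aux (u : Module.End K E) {p : K[X]} (hirr : Irreducible p)
    {A C : Submodule K E} (hAC : A ≤ C)
    (hAinv : ∀ y ∈ A, u y ∈ A) (hCinv : ∀ y ∈ C, u y ∈ C)
    (hCA : ∀ x ∈ C, aeval u p x ∈ A)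
    (hpre : ∀ a ∈ A, ∃ m ∈ C, aeval u p m = a)
    (φA : E →ₗ[K] E) (hA1 : ∀ y ∈ A, φA (u y) = u (φA y)) (hA2 : ∀ y ∈ A, φA y ∈ A) :
    ∀ l : List E, (∀ x ∈ l, x ∈ C) →
      ∃ (N : Submodule K E) (φ : E →ₗ[K] E),
        A ≤ N ∧ N ≤ C ∧ (∀ x ∈ l, x ∈ N) ∧ (∀ y ∈ N, u y ∈ N) ∧
        (∀ y ∈ A, φ y = φA y) ∧ (∀ y ∈ N, φ (u y) = u (φ y)) ∧ (∀ y ∈ N, φ y ∈ C) := by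
  intro l
  induction l with
  | nil =>
    intro _
    exact ⟨A, φA, le_refl A, hAC, by simp, hAinv, fun y _ => rfl, hA1,
      fun y hy => hAC (hA2 y hy)⟩
  | cons x l ih =>
    intro hmem
    obtain ⟨N, φ, hAN, hNC, hlN, hNinv, hext, heq, hrng⟩ :=
      ih (fun z hz => hmem z (List.mem_cons_of_mem x hz))
    have hxC : x ∈ C := hmem x List.mem_cons_self
    by_cases hx : x ∈ N
    · exact ⟨N, φ, hAN, hNC, by
        intro z hz
        rcases List.mem_cons.mp hz with h | h
        · exact h ▸ hx
        · exact hlN z h, hNinv, hext, heq, hrng⟩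
    · have hpxA : aeval u p x ∈ A := hCA x hxC
      have hpxN : aeval u p x ∈ N := hAN hpxA
      have hφpx : φ (aeval u p x) ∈ A := by
        rw [hext _ hpxA]; exact hA2 _ hpxA
      obtain ⟨m, hmC, hm⟩ := hpre _ hφpx
      obtain ⟨φ', h1, h2, h3, h4, h5⟩ := one_step u hirr hNinv φ heq hx hpxN hm
      refine ⟨N ⊔ Rsp u x, φ', le_trans hAN le_sup_left, ?_, ?_, h4, ?_, h3, ?_⟩
      · refine sup_le hNC ?_
        rintro y ⟨r, rfl⟩
        exact aeval_mem u hCinv r x hxC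
      · intro z hz
        rcases List.mem_cons.mp hz with h | h
        · exact h ▸ h5
        · exact Submodule.mem_sup_left (hlN z h)
      · intro y hy
        rw [h1 y (hAN hy)]; exact hext y hy
      · intro y hy
        obtain ⟨n, hn, r, _, hval⟩ := h2 y hy
        rw [hval]
        exact C.add_mem (hrng n hn) (aeval_mem u hCinv r m hmC)

lemma climb [FiniteDimensional K E] (u : Module.End K E) {p : K[X]} (hirr : Irreducible p)
    {A C : Submodule K E} (hAC : A ≤ C)
    (hAinv : ∀ y ∈ A, u y ∈ A) (hCinv : ∀ y ∈ C, u y ∈ C)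
    (hCA : ∀ x ∈ C, aeval u p x ∈ A)
    (hpre : ∀ a ∈ A, ∃ m ∈ C, aeval u p m = a)
    (φA : E →ₗ[K] E) (hA1 : ∀ y ∈ A, φA (u y) = u (φA y)) (hA2 : ∀ y ∈ A, φA y ∈ A) :
    ∃ φ : E →ₗ[K] E,
      (∀ y ∈ A, φ y = φA y) ∧ (∀ y ∈ C, φ (u y) = u (φ y)) ∧ (∀ y ∈ C, φ y ∈ C) := by
  obtain ⟨S, hS⟩ := (IsNoetherian.noetherian C : C.FG)
  have hSC : ∀ x ∈ S.toList, x ∈ C := by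
    intro x hx
    rw [← hS]
    exact Submodule.subset_span (by simpa using hx)
  obtain ⟨N, φ, hAN, hNC, hlN, hNinv, hext, heq, hrng⟩ :=
    climb_aux u hirr hAC hAinv hCinv hCA hpre φA hA1 hA2 S.toList hSC
  have hCN : C ≤ N := by
    rw [← hS, Submodule.span_le]
    intro x hx
    exact hlN x (by simpa using hx)
  have hNC' : N = C := le_antisymm hNC hCN
  subst hNC'
  exact ⟨φ, hext, heq, hrng⟩

/-- `V u p j = range ((aeval u p)^j)`. -/
noncomputable def V (u : Module.End K E) (p : K[X]) (j : ℕ) : Submodule K E :=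
  LinearMap.range ((aeval u p) ^ j)

lemma commute_aeval_u (u : Module.End K E) (p : K[X]) (j : ℕ) :
    u * (aeval u p) ^ j = (aeval u p) ^ j * u := by
  have h : u * aeval u p = aeval u p * u := by
    have hX : aeval u (X * p) = aeval u (p * X) := by rw [mul_comm]
    rw [map_mul, map_mul, aeval_X] at hX
    exact hX
  exact Commute.pow_right h j

lemma V_inv (u : Module.End K E) (p : K[X]) (j : ℕ) :
    ∀ y ∈ V u p j, u y ∈ V u p j := by
  rintro y ⟨z, rfl⟩
  refine ⟨u z, ?_⟩
  have := congrArg (fun f => f z) (commute_aeval_u u p j)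
  simpa using this.symm

lemma V_mono (u : Module.End K E) (p : K[X]) {j j' : ℕ} (h : j' ≤ j) :
    V u p j ≤ V u p j' := by
  rintro y ⟨z, rfl⟩
  refine ⟨((aeval u p) ^ (j - j')) z, ?_⟩
  rw [← Module.End.mul_apply, ← pow_add]
  congr 2
  omega

lemma V_succ_mem (u : Module.End K E) (p : K[X]) (s : ℕ) :
    ∀ x ∈ V u p s, aeval u p x ∈ V u p (s + 1) := by
  rintro x ⟨z, rfl⟩
  exact ⟨z, by rw [pow_succ']; rfl⟩

lemma V_succ_pre (u : Module.End K E) (p : K[X]) (s : ℕ) :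
    ∀ a ∈ V u p (s + 1), ∃ m ∈ V u p s, aeval u p m = a := by
  rintro a ⟨z, rfl⟩
  exact ⟨((aeval u p) ^ s) z, ⟨z, rfl⟩, by rw [pow_succ']; rfl⟩

lemma descend [FiniteDimensional K E] (u : Module.End K E) {p : K[X]}
    (hirr : Irreducible p) (i : ℕ) (φ₀ : E →ₗ[K] E)
    (h1 : ∀ y ∈ V u p i, φ₀ (u y) = u (φ₀ y)) (h2 : ∀ y ∈ V u p i, φ₀ y ∈ V u p i) :
    ∃ ψ : E →ₗ[K] E, (∀ x : E, ψ (u x) = u (ψ x)) ∧ (∀ y ∈ V u p i, ψ y = φ₀ y) := by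
  have key : ∀ t, t ≤ i → ∃ φ : E →ₗ[K] E,
      (∀ y ∈ V u p (i - t), φ (u y) = u (φ y)) ∧ (∀ y ∈ V u p (i - t), φ y ∈ V u p (i - t)) ∧
      (∀ y ∈ V u p i, φ y = φ₀ y) := by
    intro t
    induction t with
    | zero => intro _; exact ⟨φ₀, by simpa using h1, by simpa using h2, fun y _ => rfl⟩
    | succ t ih =>
      intro hti
      obtain ⟨φ, hq1, hq2, hq3⟩ := ih (le_of_lt hti)
      set s := i - (t + 1) with hs
      have hst : i - t = s + 1 := by omega
      rw [hst] at hq1 hq2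
      obtain ⟨φ', he1, he2, he3⟩ := climb u hirr (V_mono u p (Nat.le_succ s))
        (V_inv u p (s + 1)) (V_inv u p s) (V_succ_mem u p s) (V_succ_pre u p s) φ hq1 hq2
      refine ⟨φ', he2, he3, ?_⟩
      intro y hy
      have hy' : y ∈ V u p (s + 1) := V_mono u p (by omega) hy
      rw [he1 y hy', hq3 y hy]
  obtain ⟨ψ, hg1, hg2, hg3⟩ := key i (le_refl i)
  have hV0 : V u p (i - i) = ⊤ := by
    rw [Nat.sub_self]
    rw [eq_top_iff]
    rintro y -
    exact ⟨y, by simp [V]⟩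
  refine ⟨ψ, ?_, hg3⟩
  intro x
  exact hg1 x (by rw [hV0]; trivial)

end Stmt3Aux

open Stmt3Aux in
/-- Let `u` have minimal polynomial `p ^ k`, let `W = ker p(u)^i` (`0 ≤ i ≤ k`), a `u`-invariant
subspace, and let `ū` be the endomorphism induced by `u` on `E / W`.  Every automorphism `w` of
`E / W` commuting with `ū` lifts to an automorphism `v` of `E` commuting with `u` which induces
`w` on `E / W`. -/
theorem stmt_3 {K E : Type*} [Field K] [AddCommGroup E] [Module K E]
    [FiniteDimensional K E]
    (u : Module.End K E) (p : K[X]) (hp : p.Monic) (hirr : Irreducible p)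
    (k : ℕ) (hmin : minpoly K u = p ^ k) (i : ℕ) (hik : i ≤ k)
    (W : Submodule K E) (hW : W = LinearMap.ker ((aeval u p) ^ i))
    (ubar : Module.End K (E ⧸ W))
    (hubar : ∀ x : E, ubar (Submodule.Quotient.mk x) = Submodule.Quotient.mk (u x)) :
    ∀ w : (E ⧸ W) ≃ₗ[K] (E ⧸ W), (∀ y, w (ubar y) = ubar (w y)) →
      ∃ v : E ≃ₗ[K] E, (∀ x, v (u x) = u (v x)) ∧
        ∀ x : E, w (Submodule.Quotient.mk x) = Submodule.Quotient.mk (v x) := by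
  intro w hcomm
  classical
  set q : Module.End K E := (aeval u p) ^ i with hq
  have hVq : V u p i = LinearMap.range q := rfl
  have hqu : ∀ x : E, q (u x) = u (q x) := by
    intro x
    have := congrArg (fun f => f x) (commute_aeval_u u p i)
    simpa using this.symm
  -- the isomorphism E ⧸ W ≃ range q
  set e : (E ⧸ W) ≃ₗ[K] ↥(LinearMap.range q) :=
    (Submodule.quotEquivOfEq W (LinearMap.ker q) hW).trans (LinearMap.quotKerEquivRange q)
    with he_def
  have he : ∀ x : E, (e (Submodule.Quotient.mk x) : E) = q x := by
    intro x
    rw [he_def, LinearEquiv.trans_apply, Submodule.quotEquivOfEq_mk,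
      LinearMap.quotKerEquivRange_apply_mk]
  -- a (not yet equivariant everywhere) linear lift of `w` on range q
  obtain ⟨φ₀, hφ₀⟩ := LinearMap.exists_extend
    ((LinearMap.range q).subtype ∘ₗ (e.toLinearMap ∘ₗ (w.toLinearMap ∘ₗ e.symm.toLinearMap)))
  have hφ₀' : ∀ y : ↥(LinearMap.range q), φ₀ (y : E) = ((e (w (e.symm y))) : E) := by
    intro y
    have := congrArg (fun f => f y) hφ₀
    simpa using this
  have hkey : ∀ x : E, φ₀ (q x) = ((e (w (Submodule.Quotient.mk x))) : E) := by
    intro x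
    have hmem : q x ∈ LinearMap.range q := LinearMap.mem_range_self q x
    have h1 : e (Submodule.Quotient.mk x) = ⟨q x, hmem⟩ := Subtype.ext (he x)
    have h2 : e.symm ⟨q x, hmem⟩ = Submodule.Quotient.mk x := by
      rw [← h1, LinearEquiv.symm_apply_apply]
    have h3 := hφ₀' ⟨q x, hmem⟩
    rw [h2] at h3
    exact h3
  have hebar : ∀ z : E ⧸ W, (e (ubar z) : E) = u ((e z : E)) := by
    intro z
    obtain ⟨x, rfl⟩ := Submodule.Quotient.mk_surjective W z
    rw [hubar, he, he, hqu]
  have h1 : ∀ y ∈ V u p i, φ₀ (u y) = u (φ₀ y) := by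
    rintro y hy
    rw [hVq] at hy
    obtain ⟨x, rfl⟩ := hy
    rw [← hqu x, hkey (u x), hkey x, ← hubar x, hcomm, hebar]
  have h2 : ∀ y ∈ V u p i, φ₀ y ∈ V u p i := by
    rintro y hy
    rw [hVq] at hy ⊢
    obtain ⟨x, rfl⟩ := hy
    rw [hkey x]
    exact (e (w (Submodule.Quotient.mk x))).2
  -- the equivariant lift
  obtain ⟨ψ, hψ1, hψ2⟩ := descend u hirr i φ₀ h1 h2
  have hψaeval : ∀ (r : K[X]) (z : E), ψ (aeval u r z) = aeval u r (ψ z) := by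
    intro r z
    exact comm_aeval u (N := ⊤) (fun y _ => trivial) ψ (fun y _ => hψ1 y) r z trivial
  have hπψ : ∀ x : E, Submodule.Quotient.mk (ψ x) = w (Submodule.Quotient.mk x) := by
    intro x
    have hc : q (ψ x) = ψ (q x) := by
      have : q = aeval u (p ^ i) := by rw [map_pow]
      rw [this, hψaeval (p ^ i) x]
    have hq1 : ((e (Submodule.Quotient.mk (ψ x))) : E) = q (ψ x) := he (ψ x)
    have hq2 : ψ (q x) = φ₀ (q x) := hψ2 (q x) (by rw [hVq]; exact LinearMap.mem_range_self q x)
    have : ((e (Submodule.Quotient.mk (ψ x))) : E) = ((e (w (Submodule.Quotient.mk x))) : E) := by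
      rw [hq1, hc, hq2, hkey]
    exact e.injective (Subtype.ext this)
  -- Fitting decomposition of ψ
  set n : ℕ := Module.finrank K E with hn
  set E₀ : Submodule K E := LinearMap.ker (ψ ^ n) with hE₀
  set E₁ : Submodule K E := LinearMap.range (ψ ^ n) with hE₁
  have hstab : ∀ m : ℕ, n ≤ m → LinearMap.ker (ψ ^ m) = E₀ := fun m hm =>
    Module.End.ker_pow_eq_ker_pow_finrank_of_le hm
  have hdisj : Disjoint E₀ E₁ := by
    rw [Submodule.disjoint_def]
    rintro x hx0 ⟨y, rfl⟩
    have hy : y ∈ LinearMap.ker (ψ ^ (n + n)) := by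
      rw [LinearMap.mem_ker, pow_add, Module.End.mul_apply]
      exact hx0
    rw [hstab (n + n) (Nat.le_add_right n n)] at hy
    exact hy
  have hcodis : E₀ ⊔ E₁ = ⊤ := by
    apply Submodule.eq_top_of_finrank_eq
    have hrn := LinearMap.finrank_range_add_finrank_ker (ψ ^ n)
    have hsi := Submodule.finrank_sup_add_finrank_inf_eq E₀ E₁
    rw [disjoint_iff.mp hdisj, finrank_bot] at hsi
    rw [← hE₀, ← hE₁] at hrn
    omega
  have hcompl : IsCompl E₀ E₁ := ⟨hdisj, codisjoint_iff.mpr hcodis⟩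
  have hψcommu : Commute u ψ := LinearMap.ext fun x => (hψ1 x).symm
  have huE₀ : ∀ x ∈ E₀, u x ∈ E₀ := by
    intro x hx
    rw [hE₀, LinearMap.mem_ker] at hx ⊢
    have := congrArg (fun f => f x) (hψcommu.pow_right n)
    simp only [Module.End.mul_apply] at this
    rw [← this, hx, map_zero]
  have huE₁ : ∀ x ∈ E₁, u x ∈ E₁ := by
    rintro x ⟨y, rfl⟩
    refine ⟨u y, ?_⟩
    have := congrArg (fun f => f y) (hψcommu.pow_right n)
    simpa using this.symm
  have hψE₁ : ∀ x ∈ E₁, ψ x ∈ E₁ := by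
    rintro x ⟨y, rfl⟩
    exact ⟨ψ y, by rw [← Module.End.mul_apply, ← Module.End.mul_apply, (Commute.refl ψ).pow_left n]⟩
  set proj₀ : E →ₗ[K] ↥E₀ := Submodule.linearProjOfIsCompl E₀ E₁ hcompl with hproj₀
  set proj₁ : E →ₗ[K] ↥E₁ := Submodule.linearProjOfIsCompl E₁ E₀ hcompl.symm with hproj₁
  have hsum : ∀ x : E, ((proj₀ x : E) + (proj₁ x : E)) = x := fun x =>
    Submodule.projection_add_projection_eq_self hcompl x
  have hdecomp : ∀ (a b : E), a ∈ E₀ → b ∈ E₁ →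
      ((proj₀ (a + b) : E) = a ∧ (proj₁ (a + b) : E) = b) := by
    intro a b ha hb
    constructor
    · have h1 : (proj₀ a : E) = a :=
        congrArg Subtype.val (Submodule.linearProjOfIsCompl_apply_left hcompl ⟨a, ha⟩)
      have h2 : (proj₀ b : E) = 0 := by
        rw [show proj₀ b = 0 from Submodule.projectionOnto_apply_of_mem_right hcompl hb]; rfl
      rw [map_add, Submodule.coe_add, h1, h2, add_zero]
    · have h1 : (proj₁ b : E) = b :=
        congrArg Subtype.val (Submodule.linearProjOfIsCompl_apply_left hcompl.symm ⟨b, hb⟩)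
      have h2 : (proj₁ a : E) = 0 := by
        rw [show proj₁ a = 0 from Submodule.projectionOnto_apply_of_mem_right hcompl.symm ha]; rfl
      rw [map_add, Submodule.coe_add, h1, h2, zero_add]
  have hproj₀u : ∀ x : E, (proj₀ (u x) : E) = u (proj₀ x : E) := by
    intro x
    have hx : u x = u (proj₀ x : E) + u (proj₁ x : E) := by rw [← map_add, hsum x]
    rw [hx]
    exact (hdecomp _ _ (huE₀ _ (proj₀ x).2) (huE₁ _ (proj₁ x).2)).1
  have hproj₁u : ∀ x : E, (proj₁ (u x) : E) = u (proj₁ x : E) := by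
    intro x
    have hx : u x = u (proj₀ x : E) + u (proj₁ x : E) := by rw [← map_add, hsum x]
    rw [hx]
    exact (hdecomp _ _ (huE₀ _ (proj₀ x).2) (huE₁ _ (proj₁ x).2)).2
  set v' : E →ₗ[K] E := E₀.subtype ∘ₗ proj₀ + ψ ∘ₗ (E₁.subtype ∘ₗ proj₁) with hv'def
  have hv' : ∀ x : E, v' x = (proj₀ x : E) + ψ (proj₁ x : E) := by
    intro x; rfl
  have hinj : Function.Injective v' := by
    rw [← LinearMap.ker_eq_bot, Submodule.eq_bot_iff]
    intro x hx
    rw [LinearMap.mem_ker, hv'] at hx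
    have hψb : ψ (proj₁ x : E) ∈ E₁ := hψE₁ _ (proj₁ x).2
    have heq : (proj₀ x : E) = -(ψ (proj₁ x : E)) := eq_neg_of_add_eq_zero_left hx
    have hmem : (proj₀ x : E) ∈ E₀ ⊓ E₁ :=
      ⟨(proj₀ x).2, by rw [heq]; exact E₁.neg_mem hψb⟩
    rw [disjoint_iff.mp hdisj] at hmem
    have ha0 : (proj₀ x : E) = 0 := hmem
    have hb0 : ψ (proj₁ x : E) = 0 := by
      rw [ha0, zero_add] at hx; exact hx
    obtain ⟨y, hy⟩ := (proj₁ x).2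
    have hy' : y ∈ LinearMap.ker (ψ ^ (n + 1)) := by
      rw [LinearMap.mem_ker, pow_succ', Module.End.mul_apply, hy, hb0]
    rw [hstab (n + 1) (Nat.le_succ n)] at hy'
    have hb0' : (proj₁ x : E) = 0 := by
      rw [← hy]; exact LinearMap.mem_ker.mp hy'
    rw [← hsum x, ha0, hb0', add_zero]
  have hE₀W : ∀ x ∈ E₀, Submodule.Quotient.mk x = (0 : E ⧸ W) := by
    have haux : ∀ (j : ℕ) (x : E),
        Submodule.Quotient.mk ((ψ ^ j) x) = (0 : E ⧸ W) →
        Submodule.Quotient.mk x = (0 : E ⧸ W) := by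
      intro j
      induction j with
      | zero => intro x h; simpa using h
      | succ j ih =>
        intro x h
        rw [pow_succ, Module.End.mul_apply] at h
        have h2 := ih (ψ x) h
        rw [hπψ x] at h2
        exact (LinearEquiv.map_eq_zero_iff w).mp h2
    intro x hx
    refine haux n x ?_
    rw [LinearMap.mem_ker.mp hx, Submodule.Quotient.mk_zero]
  refine ⟨LinearEquiv.ofBijective v'
    ⟨hinj, LinearMap.injective_iff_surjective.mp hinj⟩, ?_, ?_⟩
  · intro x
    show v' (u x) = u (v' x)
    rw [hv', hv', map_add, hproj₀u, hproj₁u, hψ1]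
  · intro x
    show w (Submodule.Quotient.mk x) = Submodule.Quotient.mk (v' x)
    have h0 : Submodule.Quotient.mk (proj₀ x : E) = (0 : E ⧸ W) :=
      hE₀W _ (proj₀ x).2
    have hx1 : (Submodule.Quotient.mk x : E ⧸ W) = Submodule.Quotient.mk (proj₁ x : E) := by
      conv_lhs => rw [← hsum x]
      rw [Submodule.Quotient.mk_add, h0, zero_add]
    rw [hv', Submodule.Quotient.mk_add, h0, zero_add, hπψ, hx1]
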